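/- arXiv:1401.6247 — 2 statements merged into one kernel-verified Lean document; each statement's English description precedes it below -/
import Mathlib

section
/- Let (A_n)_{n∈ℕ} be a sequence of categories and p_n : A_{n+1} → A_n isofibrations such that each A_n has a terminal object and each p_n preserves terminal objects. Then there exists a family (t_n)_{n∈ℕ} with t_n a terminal object of A_n and p_n t_{n+1} = t_n (equality of objects) for all n. -/
open CategoryTheory Limits

/-- A functor `p : E ⥤ B` is an isofibration if every isomorphism `b ≅ p e` in `B` lifts to
an isomorphism in `E` with codomain `e`. -/
def Isofibration {E B : Type*} [Category E] [Category B] (p : E ⥤ B) : Prop :=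
  ∀ (e : E) (b : B) (φ : b ≅ p.obj e),
    ∃ (e' : E) (hb : p.obj e' = b) (ψ : e' ≅ e), p.map ψ.hom = eqToHom hb ≫ φ.hom

/-- Given a countable tower of isofibrations `p n : A (n+1) ⥤ A n` between
categories with terminal objects, each `p n` preserving them, there is a compatible family of
terminal objects `t n` with `(p n) (t (n+1)) = t n` on the nose. -/
theorem stmt_8 (A : ℕ → Type*) [∀ n, Category (A n)]
    (p : ∀ n, A (n + 1) ⥤ A n) (hiso : ∀ n, Isofibration (p n))
    [∀ n, HasTerminal (A n)]
    (hpres : ∀ n (x : A (n + 1)), IsTerminal x → Nonempty (IsTerminal ((p n).obj x))) :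
    ∃ t : ∀ n, A n,
      (∀ n, Nonempty (IsTerminal (t n))) ∧ (∀ n, (p n).obj (t (n + 1)) = t n) := by
  have step : ∀ n (x : A n), Nonempty (IsTerminal x) →
      ∃ y : A (n + 1), Nonempty (IsTerminal y) ∧ (p n).obj y = x := by
    intro n x hx
    obtain ⟨hx⟩ := hx
    have hT : IsTerminal (⊤_ A (n + 1)) := terminalIsTerminal
    obtain ⟨hpT⟩ := hpres n _ hT
    have φ : x ≅ (p n).obj (⊤_ A (n + 1)) := hx.uniqueUpToIso hpT
    obtain ⟨e', hb, ψ, -⟩ := hiso n (⊤_ A (n + 1)) x φ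
    exact ⟨e', ⟨hT.ofIso ψ.symm⟩, hb⟩
  choose f hf1 hf2 using step
  have h0 : Nonempty (IsTerminal (⊤_ A 0)) := ⟨terminalIsTerminal⟩
  let t' : ∀ n, { x : A n // Nonempty (IsTerminal x) } := fun n =>
    Nat.rec ⟨⊤_ A 0, h0⟩ (fun n x => ⟨f n x.1 x.2, hf1 n x.1 x.2⟩) n
  exact ⟨fun n => (t' n).1, fun n => (t' n).2, fun n => hf2 n (t' n).1 (t' n).2⟩
end

section
/- Let f : B → A, g : C → A, ℓ : C → B and λ : ℓ ⋙ f ⟶ g be such that for each object c of C the pair (ℓ c, λ_c) is a terminal object of the comma category f ↓ (g c). Then (ℓ, λ) is an absolute right lifting of g through f: for every category X, every pair of functors b : X → B, c : X → C, and every natural transformation χ : b ⋙ f ⟶ c ⋙ g, there exists a unique natural transformation ζ : b ⟶ c ⋙ ℓ such that χ = (whiskering λ by c) ∘ (whiskering ζ by f), i.e. χ_x = λ_{c x} ∘ f(ζ_x) for all x in X. -/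
open CategoryTheory Limits

/-- If `λ : ℓ ⋙ f ⟶ g` is such that each `(ℓ c, λ_c)` is terminal in the comma
category `f ↓ (g c)`, then `(ℓ, λ)` is an absolute right lifting of `g` through `f`: every
`χ : b ⋙ f ⟶ c ⋙ g` factors uniquely as `χ = (c ◫ λ) ∘ (ζ ◫ f)`. -/
theorem stmt_10 {B A C : Type*} [Category B] [Category A] [Category C]
    (f : B ⥤ A) (g : C ⥤ A) (l : C ⥤ B) (lam : l ⋙ f ⟶ g)
    (h : ∀ c : C,
      IsTerminal (CostructuredArrow.mk (lam.app c) : CostructuredArrow f (g.obj c))) :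
    ∀ {X : Type*} [Category X] (b : X ⥤ B) (c : X ⥤ C) (χ : b ⋙ f ⟶ c ⋙ g),
      ∃! ζ : b ⟶ c ⋙ l,
        χ = CategoryTheory.Functor.whiskerRight ζ f ≫ CategoryTheory.Functor.whiskerLeft c lam := by
  intro X _ b c χ
  let M : ∀ x : X, CostructuredArrow f (g.obj (c.obj x)) :=
    fun x => CostructuredArrow.mk (Y := b.obj x) (χ.app x)
  let z : ∀ x : X, b.obj x ⟶ l.obj (c.obj x) :=
    fun x => ((h (c.obj x)).from (M x)).left
  have wζ : ∀ x : X, f.map (z x) ≫ lam.app (c.obj x) = χ.app x := by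
    intro x
    simpa [M] using ((h (c.obj x)).from (M x)).w
  have key : ∀ x : X, ∀ (φ : b.obj x ⟶ l.obj (c.obj x)),
      f.map φ ≫ lam.app (c.obj x) = χ.app x → φ = z x := by
    intro x φ hφ
    have := (h (c.obj x)).hom_ext
      (CostructuredArrow.homMk φ (by simpa [M] using hφ) :
        M x ⟶ CostructuredArrow.mk (lam.app (c.obj x)))
      ((h (c.obj x)).from (M x))
    exact congrArg CommaMorphism.left this
  refine ⟨{ app := z, naturality := ?_ }, ?_, ?_⟩
  · intro x y u
    let N : CostructuredArrow f (g.obj (c.obj y)) :=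
      CostructuredArrow.mk (Y := b.obj x) (χ.app x ≫ g.map (c.map u))
    have h1 : f.map (b.map u ≫ z y) ≫ lam.app (c.obj y)
        = χ.app x ≫ g.map (c.map u) := by
      rw [f.map_comp, Category.assoc, wζ y]
      exact χ.naturality u
    have h2 : f.map (z x ≫ l.map (c.map u)) ≫ lam.app (c.obj y)
        = χ.app x ≫ g.map (c.map u) := by
      rw [f.map_comp, Category.assoc]
      have hn := lam.naturality (c.map u)
      simp only [Functor.comp_map] at hn
      rw [hn, ← Category.assoc, wζ x]
    have := (h (c.obj y)).hom_ext
      (CostructuredArrow.homMk (b.map u ≫ z y) (by simpa [N] using h1) :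
        N ⟶ CostructuredArrow.mk (lam.app (c.obj y)))
      (CostructuredArrow.homMk (z x ≫ l.map (c.map u)) (by simpa [N] using h2))
    exact congrArg CommaMorphism.left this
  · ext x
    simpa using (wζ x).symm
  · intro ζ' hζ'
    ext x
    apply key
    have := congrArg (fun n => NatTrans.app n x) hζ'
    simpa using this.symm
end
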